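/- Let S be an Erdős-configuration on j points and let S' ⊆ S be a sub-collection of its edges with V(S') = V(S) and |S'| = c. Let U ⊆ V(S) with |U| ≥ 4 and suppose at least a edges of S \ S' are contained in U. Set κ := j - 3 - c - a. Then the extension type (S' - S'[U], U) is max{κ, 0}-balanced, i.e. for all U ⊆ U' ⊆ V(S), the number of edges of S' not contained in U' is at least |V(S) \ U'| - max{κ, 0}. -/

import Mathlib

open Finset

def IsErdosConfig {α : Type*} [DecidableEq α] (V : Finset α) (S : Finset (Finset α)) : Prop :=
  4 ≤ V.card ∧ S.card = V.card - 2 ∧ (∀ e ∈ S, e ⊆ V ∧ e.card = 3) ∧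
  ∀ U ⊆ V, 4 ≤ U.card → U.card < V.card →
    (S.filter (fun e => e ⊆ U)).card ≤ U.card - 3

/-- Proposition on Erdős-configuration extension analysis: with `S` an Erdős-configuration
on `j = |V|` points, `S' ⊆ S` spanning all of `V` with `|S'| = c`, `U ⊆ V` with `|U| ≥ 4`
containing at least `a` edges of `S \ S'`, and `κ := j - 3 - c - a`, the extension type
`(S' - S'[U], U)` is `max κ 0`-balanced: for every `U ⊆ U' ⊆ V`, the number of edges of
`S'` not contained in `U'` is at least `|V \ U'| - max κ 0`. -/
theorem erdos_config_extension_balanced {α : Type*} [DecidableEq α]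
    (V : Finset α) (S S' : Finset (Finset α))
    (hS : IsErdosConfig V S) (hsub : S' ⊆ S) (hspan : V = S'.sup id)
    (c a : ℕ) (hc : S'.card = c)
    (U : Finset α) (hUV : U ⊆ V) (hU4 : 4 ≤ U.card)
    (ha : a ≤ ((S \ S').filter (fun e => e ⊆ U)).card) :
    ∀ U' : Finset α, U ⊆ U' → U' ⊆ V →
      ((V \ U').card : ℤ) - max ((V.card : ℤ) - 3 - c - a) 0 ≤
        ((S'.filter (fun e => ¬ e ⊆ U')).card : ℤ) := by
  intro U' hUU' hU'V
  rcases lt_or_ge U'.card V.card with hlt | hge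
  · -- proper subset case
    have hU'4 : 4 ≤ U'.card := le_trans hU4 (card_le_card hUU')
    have h1 : (S.filter (fun e => e ⊆ U')).card ≤ U'.card - 3 :=
      hS.2.2.2 U' hU'V hU'4 hlt
    -- split S into S' and S \ S'
    have hunion : S'.filter (fun e => e ⊆ U') ∪ (S \ S').filter (fun e => e ⊆ U')
        = S.filter (fun e => e ⊆ U') := by
      rw [← filter_union, union_sdiff_of_subset hsub]
    have hdisj : Disjoint (S'.filter (fun e => e ⊆ U')) ((S \ S').filter (fun e => e ⊆ U')) :=
      (disjoint_sdiff).mono (filter_subset _ _) (filter_subset _ _)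
    have h2 : (S'.filter (fun e => e ⊆ U')).card + ((S \ S').filter (fun e => e ⊆ U')).card
        = (S.filter (fun e => e ⊆ U')).card := by
      rw [← card_union_of_disjoint hdisj, hunion]
    have h3 : a ≤ ((S \ S').filter (fun e => e ⊆ U')).card := by
      refine le_trans ha (card_le_card (monotone_filter_right _ ?_))
      intro e _ he
      exact he.trans hUU'
    have h4 : (S'.filter (fun e => e ⊆ U')).card + (S'.filter (fun e => ¬ e ⊆ U')).card
        = S'.card := card_filter_add_card_filter_not _
    have hVU' : (V \ U').card = V.card - U'.card := card_sdiff_of_subset hU'V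
    have hcast1 : ((U'.card - 3 : ℕ) : ℤ) = (U'.card : ℤ) - 3 := by
      have : 3 ≤ U'.card := by omega
      push_cast [this]; ring
    have hcast2 : ((V.card - U'.card : ℕ) : ℤ) = (V.card : ℤ) - U'.card := by
      have : U'.card ≤ V.card := le_of_lt hlt
      push_cast [this]; ring
    have h1' : ((S.filter (fun e => e ⊆ U')).card : ℤ) ≤ (U'.card : ℤ) - 3 := by
      rw [← hcast1]; exact_mod_cast h1
    have hmax : ((V.card : ℤ) - 3 - c - a) ≤ max ((V.card : ℤ) - 3 - c - a) 0 :=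
      le_max_left _ _
    have h2' : ((S'.filter (fun e => e ⊆ U')).card : ℤ)
        + ((S \ S').filter (fun e => e ⊆ U')).card = (S.filter (fun e => e ⊆ U')).card := by
      exact_mod_cast h2
    have h3' : (a : ℤ) ≤ ((S \ S').filter (fun e => e ⊆ U')).card := by exact_mod_cast h3
    have h4' : ((S'.filter (fun e => e ⊆ U')).card : ℤ)
        + ((S'.filter (fun e => ¬ e ⊆ U')).card : ℤ) = (c : ℤ) := by
      exact_mod_cast hc ▸ h4
    rw [hVU', hcast2]
    linarith
  · -- U' = V
    have hU'eq : U' = V := eq_of_subset_of_card_le hU'V hge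
    subst hU'eq
    have h0 : (U' \ U').card = 0 := by simp
    rw [h0]
    have := le_max_right ((U'.card : ℤ) - 3 - c - a) 0
    have hnn : (0:ℤ) ≤ ((S'.filter (fun e => ¬ e ⊆ U')).card : ℤ) := Int.ofNat_nonneg _
    push_cast
    linarith
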